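/- Subregion-isometry implies Ryu–Takayanagi: let |ψ⟩ = (C⊗C̄)(|Ψ⟩_{BB̄} ⊗ |Φ⟩_{W W̄}), where C : H_W ⊗ H_B → H_A and C̄ : H_{W̄} ⊗ H_{B̄} → H_{Ā} are isometries, |Ψ⟩_{BB̄} is a tensor product of n maximally entangled pairs each of local dimension D, and |Φ⟩ is an arbitrary normalized state. Then the reduced density matrix satisfies ρ_A = C (τ_B ⊗ ρ_W) C† where τ_B is maximally mixed on H_B and ρ_W = tr_{W̄}|Φ⟩⟨Φ|, and hence S(ρ_A) = n log D + S(ρ_W). -/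

import Mathlib

open Matrix Kronecker BigOperators MeasureTheory

/-- Von Neumann entropy of a matrix (via eigenvalues of a Hermitian matrix). -/
noncomputable def vNEntropy {n : Type*} [Fintype n] [DecidableEq n] (ρ : Matrix n n ℂ) : ℝ :=
  if h : ρ.IsHermitian then -∑ i, h.eigenvalues i * Real.log (h.eigenvalues i) else 0

/-- Partial trace over the second (right) tensor factor. -/
noncomputable def ptraceR {a b : Type*} [Fintype b] (ρ : Matrix (a × b) (a × b) ℂ) :
    Matrix a a ℂ := Matrix.of fun i j => ∑ k, ρ (i, k) (j, k)

/-- Partial trace over the first (left) tensor factor. -/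
noncomputable def ptraceL {a b : Type*} [Fintype a] (ρ : Matrix (a × b) (a × b) ℂ) :
    Matrix b b ℂ := Matrix.of fun i j => ∑ k, ρ (k, i) (k, j)

/-- Outer product |v⟩⟨w|. -/
def outer {n : Type*} (v w : n → ℂ) : Matrix n n ℂ := Matrix.of fun i j => v i * star (w j)

section RTHelpers

open Polynomial

lemma RT_eval_charpoly {m : Type*} [Fintype m] [DecidableEq m] (M : Matrix m m ℂ) (x : ℂ) :
    M.charpoly.eval x = (Matrix.diagonal (fun _ : m => x) - M).det := by
  rw [Matrix.charpoly, ← Polynomial.coe_evalRingHom, RingHom.map_det]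
  congr 1
  ext i j
  by_cases h : i = j <;>
    simp [h, Matrix.charmatrix_apply, Matrix.diagonal, Matrix.map_apply]

lemma RT_det_diag_sub {m : Type*} [Fintype m] [DecidableEq m] (N : Matrix m m ℂ) {x : ℂ}
    (hx : x ≠ 0) :
    (Matrix.diagonal (fun _ : m => x) - N).det = x ^ (Fintype.card m) * (1 - x⁻¹ • N).det := by
  have h1 : Matrix.diagonal (fun _ : m => x) - N = x • (1 - x⁻¹ • N) := by
    rw [smul_sub, smul_smul, mul_inv_cancel₀ hx, one_smul]
    congr 1
    ext i j
    by_cases h : i = j <;> simp [h, Matrix.diagonal, Matrix.one_apply]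
  rw [h1, Matrix.det_smul]

lemma RT_charpoly_rect {m k : Type*} [Fintype m] [DecidableEq m] [Fintype k] [DecidableEq k]
    (F : Matrix m k ℂ) (G : Matrix k m ℂ) :
    X ^ (Fintype.card k) * (F * G).charpoly = X ^ (Fintype.card m) * (G * F).charpoly := by
  apply Polynomial.eq_of_infinite_eval_eq
  apply ((Set.finite_singleton (0:ℂ)).infinite_compl).mono
  intro x hx
  have hx : x ≠ 0 := by simpa using hx
  simp only [Set.mem_setOf_eq, eval_mul, eval_pow, eval_X]
  rw [RT_eval_charpoly, RT_eval_charpoly, RT_det_diag_sub _ hx, RT_det_diag_sub _ hx]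
  have key : (1 - x⁻¹ • (F * G)).det = (1 - x⁻¹ • (G * F)).det := by
    have := Matrix.det_one_add_mul_comm (-(x⁻¹ • F)) G
    simpa [Matrix.neg_mul, Matrix.mul_neg, Matrix.smul_mul, Matrix.mul_smul,
      sub_eq_add_neg] using this
  rw [key]; ring

lemma RT_charpoly_diagonal {m : Type*} [Fintype m] [DecidableEq m] (d : m → ℂ) :
    (Matrix.diagonal d).charpoly = ∏ i, (X - C (d i)) := by
  rw [Matrix.charpoly]
  have : charmatrix (Matrix.diagonal d) = Matrix.diagonal (fun i => (X : ℂ[X]) - C (d i)) := by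
    ext i j
    by_cases h : i = j <;>
      simp [h, Matrix.charmatrix_apply, Matrix.diagonal]
  rw [this, Matrix.det_diagonal]

lemma RT_charpoly_iso {A K : Type*} [Fintype A] [DecidableEq A] [Fintype K] [DecidableEq K]
    (E : Matrix A K ℂ) (hE : Eᴴ * E = 1) (d : K → ℂ) :
    X ^ (Fintype.card K) * (E * Matrix.diagonal d * Eᴴ).charpoly
      = X ^ (Fintype.card A) * ∏ p, (X - C (d p)) := by
  have h := RT_charpoly_rect (E * Matrix.diagonal d) Eᴴ
  have h2 : Eᴴ * (E * Matrix.diagonal d) = Matrix.diagonal d := by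
    rw [← Matrix.mul_assoc, hE, Matrix.one_mul]
  rw [h2, RT_charpoly_diagonal] at h
  exact h

lemma RT_herm_charpoly {m : Type*} [Fintype m] [DecidableEq m] {ρ : Matrix m m ℂ}
    (hρ : ρ.IsHermitian) :
    ρ.charpoly = ∏ i, (X - C ((hρ.eigenvalues i : ℝ) : ℂ)) := by
  have hU : (hρ.eigenvectorUnitary : Matrix m m ℂ)ᴴ * (hρ.eigenvectorUnitary : Matrix m m ℂ)
      = 1 := by
    rw [← Matrix.star_eq_conjTranspose]
    exact_mod_cast Unitary.coe_star_mul_self hρ.eigenvectorUnitary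
  have h := RT_charpoly_iso (hρ.eigenvectorUnitary : Matrix m m ℂ) hU
      (RCLike.ofReal ∘ hρ.eigenvalues)
  rw [← Matrix.star_eq_conjTranspose, ← Unitary.conjStarAlgAut_apply (S := ℂ), ← hρ.spectral_theorem] at h
  have := mul_left_cancel₀ (pow_ne_zero (Fintype.card m) (Polynomial.X_ne_zero (R := ℂ))) h
  simpa using this

lemma RT_herm_roots {m : Type*} [Fintype m] [DecidableEq m] {ρ : Matrix m m ℂ}
    (hρ : ρ.IsHermitian) :
    ρ.charpoly.roots = Finset.univ.val.map (fun i => ((hρ.eigenvalues i : ℝ) : ℂ)) := by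
  rw [RT_herm_charpoly hρ]
  have h : ∏ i, (X - C ((hρ.eigenvalues i : ℝ) : ℂ))
      = ((Finset.univ.val.map (fun i => ((hρ.eigenvalues i : ℝ) : ℂ))).map
          (fun z : ℂ => X - C z)).prod := by
    rw [Multiset.map_map]
    rfl
  rw [h, Polynomial.roots_multiset_prod_X_sub_C]

lemma RT_eig_multiset {A K : Type*} [Fintype A] [DecidableEq A] [Fintype K] [DecidableEq K]
    {ρA : Matrix A A ℂ} (hA : ρA.IsHermitian) (g : K → ℝ)
    (h : X ^ (Fintype.card K) * ρA.charpoly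
        = X ^ (Fintype.card A) * ∏ p, (X - C ((g p : ℝ) : ℂ))) :
    Finset.univ.val.map hA.eigenvalues + Multiset.replicate (Fintype.card K) (0 : ℝ)
      = Finset.univ.val.map g + Multiset.replicate (Fintype.card A) (0 : ℝ) := by
  have hprod : ∏ p, (X - C ((g p : ℝ) : ℂ))
      = ((Finset.univ.val.map (fun p => ((g p : ℝ) : ℂ))).map (fun z : ℂ => X - C z)).prod := by
    rw [Multiset.map_map]; rfl
  have hne1 : (X : ℂ[X]) ^ (Fintype.card K) ≠ 0 := pow_ne_zero _ Polynomial.X_ne_zero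
  have hne2 : ρA.charpoly ≠ 0 := ρA.charpoly_monic.ne_zero
  have hne3 : ∏ p, (X - C ((g p : ℝ) : ℂ)) ≠ 0 :=
    (Polynomial.monic_prod_of_monic _ _ (fun p _ => Polynomial.monic_X_sub_C _)).ne_zero
  have hroots := congrArg Polynomial.roots h
  rw [Polynomial.roots_mul (mul_ne_zero hne1 hne2),
    Polynomial.roots_mul (mul_ne_zero (pow_ne_zero _ Polynomial.X_ne_zero) hne3),
    Polynomial.roots_pow, Polynomial.roots_pow, Polynomial.roots_X,
    RT_herm_roots hA, hprod, Polynomial.roots_multiset_prod_X_sub_C] at hroots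
  have hr2 : (Multiset.replicate (Fintype.card K) (0 : ℂ))
      + Finset.univ.val.map (fun i => ((hA.eigenvalues i : ℝ) : ℂ))
      = (Multiset.replicate (Fintype.card A) (0 : ℂ))
      + Finset.univ.val.map (fun p => ((g p : ℝ) : ℂ)) := by
    simpa [Multiset.nsmul_singleton] using hroots
  have hmap : Multiset.map (fun r : ℝ => (r : ℂ))
      (Finset.univ.val.map hA.eigenvalues + Multiset.replicate (Fintype.card K) (0 : ℝ))
      = Multiset.map (fun r : ℝ => (r : ℂ))
      (Finset.univ.val.map g + Multiset.replicate (Fintype.card A) (0 : ℝ)) := by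
    simp only [Multiset.map_add, Multiset.map_replicate, Multiset.map_map,
      Complex.ofReal_zero, Function.comp_def]
    rw [add_comm, hr2, add_comm]
  exact Multiset.map_injective Complex.ofReal_injective hmap

lemma RT_sum_f {a b : ℕ} {s1 s2 : Multiset ℝ} (f : ℝ → ℝ) (hf : f 0 = 0)
    (h : s1 + Multiset.replicate a (0 : ℝ) = s2 + Multiset.replicate b (0 : ℝ)) :
    (s1.map f).sum = (s2.map f).sum := by
  have := congrArg (fun s : Multiset ℝ => (s.map f).sum) h
  simpa [Multiset.map_add, Multiset.map_replicate, hf] using this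

lemma RT_outer_mulVec {m k : Type*} [Fintype m] [Fintype k] (M : Matrix m k ℂ) (v w : k → ℂ) :
    outer (M.mulVec v) (M.mulVec w) = M * outer v w * Mᴴ := by
  ext i j
  simp only [outer, Matrix.of_apply, Matrix.mulVec, dotProduct, Matrix.mul_apply,
    Matrix.conjTranspose_apply, star_sum, star_mul', Finset.mul_sum, Finset.sum_mul]
  apply Finset.sum_congr rfl; intro p _
  apply Finset.sum_congr rfl; intro q _
  ring

lemma RT_contract {Ab K2 : Type*} [Fintype Ab] [Fintype K2] [DecidableEq K2]
    (B : Matrix Ab K2 ℂ) (hB : Bᴴ * B = 1) (p p' : K2) :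
    ∑ ab, B ab p * star (B ab p') = if p' = p then 1 else 0 := by
  have h : (Bᴴ * B) p' p = (1 : Matrix K2 K2 ℂ) p' p := by rw [hB]
  simp only [Matrix.mul_apply, Matrix.conjTranspose_apply, Matrix.one_apply] at h
  rw [← h]
  apply Finset.sum_congr rfl; intro ab _
  ring

lemma RT_ptrace_conj {A Ab K1 K2 : Type*} [Fintype A] [Fintype Ab] [Fintype K1] [Fintype K2]
    [DecidableEq K2]
    (Am : Matrix A K1 ℂ) (B : Matrix Ab K2 ℂ) (hB : Bᴴ * B = 1)
    (X : Matrix (K1 × K2) (K1 × K2) ℂ) :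
    ptraceR ((Am ⊗ₖ B) * X * (Am ⊗ₖ B)ᴴ) = Am * ptraceR X * Amᴴ := by
  ext a a'
  have tri : ∀ r s : A × Ab, ((Am ⊗ₖ B) * X * (Am ⊗ₖ B)ᴴ) r s
      = ∑ p, ∑ p', (Am r.1 p.1 * B r.2 p.2) * X p p'
          * (star (Am s.1 p'.1) * star (B s.2 p'.2)) := by
    intro r s
    simp only [Matrix.mul_apply, Matrix.conjTranspose_apply, Matrix.kroneckerMap_apply,
      star_mul', Finset.sum_mul]
    rw [Finset.sum_comm]
  have lhs1 : (ptraceR ((Am ⊗ₖ B) * X * (Am ⊗ₖ B)ᴴ)) a a'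
      = ∑ p, ∑ p', (Am a p.1 * X p p' * star (Am a' p'.1))
          * ∑ ab, B ab p.2 * star (B ab p'.2) := by
    show (∑ ab, ((Am ⊗ₖ B) * X * (Am ⊗ₖ B)ᴴ) (a, ab) (a', ab)) = _
    simp only [tri]
    rw [Finset.sum_comm]
    apply Finset.sum_congr rfl; intro p _
    rw [Finset.sum_comm]
    apply Finset.sum_congr rfl; intro p' _
    rw [Finset.mul_sum]
    apply Finset.sum_congr rfl; intro ab _
    ring
  rw [lhs1]
  have rhs1 : (Am * ptraceR X * Amᴴ) a a'
      = ∑ p : K1 × K2, ∑ k1' : K1, Am a p.1 * X p (k1', p.2) * star (Am a' k1') := by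
    simp only [Matrix.mul_apply, Matrix.conjTranspose_apply, ptraceR, Matrix.of_apply,
      Finset.sum_mul, Finset.mul_sum]
    rw [Fintype.sum_prod_type]
    rw [Finset.sum_comm]
    apply Finset.sum_congr rfl; intro k1 _
    rw [Finset.sum_comm]
  rw [rhs1]
  apply Finset.sum_congr rfl; intro p _
  simp only [RT_contract B hB]
  rw [Fintype.sum_prod_type]
  simp only [mul_ite, mul_one, mul_zero, Finset.sum_ite_eq', Finset.mem_univ, if_true]

lemma RT_inner {W Wb F : Type*} [Fintype W] [Fintype Wb] [Fintype F] [DecidableEq F]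
    (n D : ℕ) (Φ : W × Wb → ℂ) :
    ptraceR (outer
        (fun q : (W × F) × (Wb × F) =>
          ((Real.sqrt ((D : ℝ) ^ n) : ℂ))⁻¹ * (if q.1.2 = q.2.2 then 1 else 0)
            * Φ (q.1.1, q.2.1))
        (fun q : (W × F) × (Wb × F) =>
          ((Real.sqrt ((D : ℝ) ^ n) : ℂ))⁻¹ * (if q.1.2 = q.2.2 then 1 else 0)
            * Φ (q.1.1, q.2.1)))
      = ptraceR (outer Φ Φ) ⊗ₖ (((D : ℂ) ^ n)⁻¹ • (1 : Matrix F F ℂ)) := by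
  have hsq : ((Real.sqrt ((D : ℝ) ^ n) : ℂ))⁻¹ * star ((Real.sqrt ((D : ℝ) ^ n) : ℂ))⁻¹
      = ((D : ℂ) ^ n)⁻¹ := by
    have h2 : Real.sqrt ((D : ℝ) ^ n) * Real.sqrt ((D : ℝ) ^ n) = (D : ℝ) ^ n :=
      Real.mul_self_sqrt (by positivity)
    rw [star_inv₀, Complex.star_def, Complex.conj_ofReal, ← mul_inv, ← Complex.ofReal_mul, h2]
    push_cast
    ring
  ext ⟨w, m⟩ ⟨w', m'⟩
  simp only [ptraceR, outer, Matrix.of_apply, Matrix.kroneckerMap_apply, Matrix.smul_apply,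
    Matrix.one_apply, Fintype.sum_prod_type, star_mul', apply_ite (star : ℂ → ℂ), star_one,
    star_zero, mul_ite, ite_mul, mul_zero, zero_mul, mul_one, one_mul]
  simp only [Finset.sum_ite_eq, Finset.mem_univ, if_true, smul_eq_mul]
  by_cases h : m = m'
  · subst h
    simp only [if_pos rfl, if_true, mul_one]
    rw [Finset.sum_mul]
    apply Finset.sum_congr rfl; intro x _
    rw [← hsq]
    ring
  · simp [h, fun hh : m' = m => h hh.symm]

lemma RT_ptrace_outer_herm {W Wb : Type*} [Fintype Wb] (v : W × Wb → ℂ) :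
    (ptraceR (outer v v)).IsHermitian := by
  show _ᴴ = _
  ext i j
  simp only [ptraceR, outer, Matrix.of_apply, Matrix.conjTranspose_apply, star_sum, star_mul',
    star_star]
  apply Finset.sum_congr rfl; intro k _
  ring

lemma RT_kron_conjT {A B K1 K2 : Type*} (M : Matrix A K1 ℂ) (N : Matrix B K2 ℂ) :
    (M ⊗ₖ N)ᴴ = Mᴴ ⊗ₖ Nᴴ := by
  ext ⟨i, j⟩ ⟨k, l⟩
  simp [Matrix.conjTranspose_apply, Matrix.kroneckerMap_apply, star_mul', mul_comm]

lemma RT_herm_trace {m : Type*} [Fintype m] [DecidableEq m] {ρ : Matrix m m ℂ}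
    (hρ : ρ.IsHermitian) :
    ρ.trace = ∑ i, ((hρ.eigenvalues i : ℝ) : ℂ) := by
  conv_lhs => rw [hρ.spectral_theorem]
  rw [Unitary.conjStarAlgAut_apply, Matrix.trace_mul_cycle]
  have hU : star (hρ.eigenvectorUnitary : Matrix m m ℂ) * (hρ.eigenvectorUnitary : Matrix m m ℂ)
      = 1 := by exact_mod_cast Unitary.coe_star_mul_self hρ.eigenvectorUnitary
  rw [hU, Matrix.one_mul, Matrix.trace_diagonal]
  rfl

end RTHelpers

/-- Subregion isometry implies the Ryu–Takayanagi formula: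
for `|ψ⟩ = (C ⊗ C̄)(|Ψ⟩_{BB̄} ⊗ |Φ⟩_{WW̄})` with `C, C̄` isometries and `|Ψ⟩` a
product of `n` maximally entangled pairs of local dimension `D`,
`ρ_A = C (ρ_W ⊗ I/Dⁿ) C†` and `S(ρ_A) = n log D + S(ρ_W)`. -/
theorem subregion_isometry_RT
    {W Wb A Ab : Type*} [Fintype W] [DecidableEq W] [Fintype Wb] [DecidableEq Wb]
    [Fintype A] [DecidableEq A] [Fintype Ab] [DecidableEq Ab]
    (n D : ℕ) (hD : 0 < D)
    (C : Matrix A (W × (Fin n → Fin D)) ℂ) (hC : Cᴴ * C = 1)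
    (Cb : Matrix Ab (Wb × (Fin n → Fin D)) ℂ) (hCb : Cbᴴ * Cb = 1)
    (Φ : W × Wb → ℂ) (hΦ : ∑ p, star (Φ p) * Φ p = 1)
    (ψ : A × Ab → ℂ)
    (hψ : ψ = (C ⊗ₖ Cb).mulVec (fun q =>
      ((Real.sqrt ((D : ℝ) ^ n) : ℂ))⁻¹ * (if q.1.2 = q.2.2 then 1 else 0) * Φ (q.1.1, q.2.1)))
    (ρA : Matrix A A ℂ) (hρA : ρA = ptraceR (outer ψ ψ))
    (ρW : Matrix W W ℂ) (hρW : ρW = ptraceR (outer Φ Φ)) :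
    ρA = C * (ρW ⊗ₖ (((D : ℂ) ^ n)⁻¹ •
        (1 : Matrix (Fin n → Fin D) (Fin n → Fin D) ℂ))) * Cᴴ ∧
    vNEntropy ρA = n * Real.log D + vNEntropy ρW := by
  have hFcard : Fintype.card (Fin n → Fin D) = D ^ n := by
    simp
  have part1 : ρA = C * (ρW ⊗ₖ (((D : ℂ) ^ n)⁻¹ •
      (1 : Matrix (Fin n → Fin D) (Fin n → Fin D) ℂ))) * Cᴴ := by
    rw [hρA, hψ, RT_outer_mulVec, RT_ptrace_conj C Cb hCb, RT_inner n D Φ, ← hρW]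
  refine ⟨part1, ?_⟩
  have hρWH : ρW.IsHermitian := by rw [hρW]; exact RT_ptrace_outer_herm Φ
  set U : Matrix W W ℂ := (hρWH.eigenvectorUnitary : Matrix W W ℂ) with hU
  have hUU : Uᴴ * U = 1 := by
    rw [hU, ← Matrix.star_eq_conjTranspose]
    exact_mod_cast Unitary.coe_star_mul_self hρWH.eigenvectorUnitary
  set c : ℝ := (((D : ℝ)) ^ n)⁻¹ with hc
  have hcpos : 0 < c := by rw [hc]; positivity
  set g : W × (Fin n → Fin D) → ℝ := fun p => hρWH.eigenvalues p.1 * c with hg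
  have hdvec : Matrix.diagonal (fun p : W × (Fin n → Fin D) => ((g p : ℝ) : ℂ))
      = (Matrix.diagonal (RCLike.ofReal ∘ hρWH.eigenvalues)) ⊗ₖ
        Matrix.diagonal (fun _ : Fin n → Fin D => (((D : ℂ) ^ n)⁻¹)) := by
    rw [Matrix.diagonal_kronecker_diagonal]
    congr 1
    funext p
    rw [hg, hc]
    push_cast
    rfl
  have hsmul1 : (((D : ℂ) ^ n)⁻¹ • (1 : Matrix (Fin n → Fin D) (Fin n → Fin D) ℂ))
      = Matrix.diagonal (fun _ : Fin n → Fin D => ((D : ℂ) ^ n)⁻¹) := by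
    ext i j
    by_cases h : i = j <;> simp [h, Matrix.one_apply]
  have hM : ρW ⊗ₖ (((D : ℂ) ^ n)⁻¹ • (1 : Matrix (Fin n → Fin D) (Fin n → Fin D) ℂ))
      = (U ⊗ₖ (1 : Matrix (Fin n → Fin D) (Fin n → Fin D) ℂ))
        * Matrix.diagonal (fun p : W × (Fin n → Fin D) => ((g p : ℝ) : ℂ))
        * (U ⊗ₖ (1 : Matrix (Fin n → Fin D) (Fin n → Fin D) ℂ))ᴴ := by
    rw [RT_kron_conjT, Matrix.conjTranspose_one, hdvec, hsmul1,
      ← Matrix.mul_kronecker_mul, ← Matrix.mul_kronecker_mul, Matrix.one_mul, Matrix.mul_one]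
    congr 1
    rw [hU, ← Matrix.star_eq_conjTranspose, ← Unitary.conjStarAlgAut_apply (S := ℂ), ← hρWH.spectral_theorem]
  set E : Matrix A (W × (Fin n → Fin D)) ℂ :=
    C * (U ⊗ₖ (1 : Matrix (Fin n → Fin D) (Fin n → Fin D) ℂ)) with hE
  have hEE : Eᴴ * E = 1 := by
    rw [hE, Matrix.conjTranspose_mul, Matrix.mul_assoc, ← Matrix.mul_assoc Cᴴ C, hC,
      Matrix.one_mul, RT_kron_conjT, Matrix.conjTranspose_one, ← Matrix.mul_kronecker_mul,
      hUU, Matrix.one_mul, Matrix.one_kronecker_one]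
  have hρA2 : ρA = E * Matrix.diagonal (fun p : W × (Fin n → Fin D) => ((g p : ℝ) : ℂ)) * Eᴴ := by
    rw [part1, hM, hE]
    simp only [Matrix.conjTranspose_mul, Matrix.mul_assoc]
  have hAH : ρA.IsHermitian := by
    rw [hρA2]
    have hd : (Matrix.diagonal (fun p : W × (Fin n → Fin D) => ((g p : ℝ) : ℂ)))ᴴ
        = Matrix.diagonal (fun p : W × (Fin n → Fin D) => ((g p : ℝ) : ℂ)) := by
      ext i j
      by_cases h : i = j
      · subst h
        simp [Matrix.conjTranspose_apply, Complex.conj_ofReal]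
      · simp only [Matrix.conjTranspose_apply, Matrix.diagonal_apply_ne _ h,
          Matrix.diagonal_apply_ne _ (fun hh : j = i => h hh.symm), star_zero]
    show _ᴴ = _
    simp only [Matrix.conjTranspose_mul, Matrix.conjTranspose_conjTranspose, hd, Matrix.mul_assoc]
  have hcp : Polynomial.X ^ (Fintype.card (W × (Fin n → Fin D))) * ρA.charpoly
      = Polynomial.X ^ (Fintype.card A) * ∏ p, (Polynomial.X - Polynomial.C ((g p : ℝ) : ℂ)) := by
    have h := RT_charpoly_iso E hEE (fun p : W × (Fin n → Fin D) => ((g p : ℝ) : ℂ))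
    rw [← hρA2] at h
    exact h
  have hmult := RT_eig_multiset hAH g hcp
  set f : ℝ → ℝ := fun x => x * Real.log x with hf
  have hf0 : f 0 = 0 := by simp [hf]
  have hsum : ∑ i, f (hAH.eigenvalues i) = ∑ p : W × (Fin n → Fin D), f (g p) := by
    have h := RT_sum_f f hf0 hmult
    rw [Multiset.map_map, Multiset.map_map] at h
    exact h
  -- trace of ρW is 1
  have htrace : ∑ w, hρWH.eigenvalues w = 1 := by
    have h1 : ρW.trace = 1 := by
      rw [hρW, ← hΦ, Matrix.trace]
      rw [Fintype.sum_prod_type]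
      apply Finset.sum_congr rfl; intro w _
      simp only [Matrix.diag_apply, ptraceR, outer, Matrix.of_apply]
      apply Finset.sum_congr rfl; intro wb _
      ring
    have h2 := RT_herm_trace hρWH
    rw [h1] at h2
    exact_mod_cast h2.symm
  -- pointwise log identity
  have hptw : ∀ x : ℝ, f (x * c) = c * f x + (x * c) * Real.log c := by
    intro x
    rcases eq_or_ne x 0 with h | h
    · simp [h, hf]
    · simp only [hf]
      rw [Real.log_mul h (ne_of_gt hcpos)]
      ring
  have hsum2 : ∑ p : W × (Fin n → Fin D), f (g p)
      = (D : ℝ) ^ n * ∑ w, f (hρWH.eigenvalues w * c) := by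
    rw [Fintype.sum_prod_type, Finset.mul_sum]
    apply Finset.sum_congr rfl; intro w _
    trans (∑ _y : Fin n → Fin D, f (hρWH.eigenvalues w * c))
    · exact Finset.sum_congr rfl (fun y _ => rfl)
    · rw [Finset.sum_const, Finset.card_univ, hFcard, nsmul_eq_mul]
      push_cast
      ring
  have hsum3 : ∑ w, f (hρWH.eigenvalues w * c)
      = c * (∑ w, f (hρWH.eigenvalues w)) + c * Real.log c := by
    calc ∑ w, f (hρWH.eigenvalues w * c)
        = ∑ w, (c * f (hρWH.eigenvalues w) + (hρWH.eigenvalues w * c) * Real.log c) :=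
          Finset.sum_congr rfl (fun w _ => hptw _)
      _ = c * (∑ w, f (hρWH.eigenvalues w)) + (∑ w, hρWH.eigenvalues w) * c * Real.log c := by
          rw [Finset.sum_add_distrib, Finset.mul_sum, ← Finset.sum_mul, ← Finset.sum_mul]
      _ = c * (∑ w, f (hρWH.eigenvalues w)) + c * Real.log c := by rw [htrace]; ring
  have hDc : (D : ℝ) ^ n * c = 1 := by
    rw [hc]
    field_simp
  have hlogc : Real.log c = -(n * Real.log D) := by
    rw [hc, Real.log_inv, Real.log_pow]
  have hA_ent : vNEntropy ρA = -∑ i, f (hAH.eigenvalues i) := by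
    rw [vNEntropy, dif_pos hAH]
  have hW_ent : vNEntropy ρW = -∑ w, f (hρWH.eigenvalues w) := by
    rw [vNEntropy, dif_pos hρWH]
  rw [hA_ent, hW_ent, hsum, hsum2, hsum3]
  rw [mul_add, ← mul_assoc, hDc, ← mul_assoc, hDc, one_mul, one_mul, hlogc]
  ring
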